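/- arXiv:1903.00456 — 2 statements merged into one kernel-verified Lean document; each statement's English description precedes it below -/
import Mathlib

section
/- If X is positive semidefinite with all diagonal entries nonzero and Y is positive definite, then the Hadamard product X ∘ Y is positive definite. -/
open Matrix ComplexOrder

/-- If `X` is positive semidefinite with all diagonal entries nonzero and `Y` is
positive definite, then the Hadamard product `X ∘ Y` is positive definite. -/
theorem hadamard_posDef_of_posSemidef_diag_ne_zero {n : ℕ}
    (X Y : Matrix (Fin n) (Fin n) ℂ)
    (hX : X.PosSemidef) (hXdiag : ∀ i, X i i ≠ 0) (hY : Y.PosDef) :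
    (X.hadamard Y).PosDef := by
  obtain ⟨A, hA⟩ : ∃ A : Matrix (Fin n) (Fin n) ℂ, X = Aᴴ * A := by
    open scoped MatrixOrder in exact CStarAlgebra.nonneg_iff_eq_star_mul_self.mp hX.nonneg
  refine Matrix.PosDef.of_dotProduct_mulVec_pos ?_ ?_
  · ext i j
    simp only [conjTranspose_apply, hadamard_apply, star_mul']
    rw [show star (X j i) = X i j from congrFun (congrFun hX.1 i) j,
        show star (Y j i) = Y i j from congrFun (congrFun hY.1 i) j]
  intro v hv
  set w : Fin n → Fin n → ℂ := fun k j => A k j * v j with hw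
  have key : star v ⬝ᵥ (X.hadamard Y) *ᵥ v = ∑ k, star (w k) ⬝ᵥ Y *ᵥ (w k) := by
    simp only [dotProduct, mulVec, hadamard_apply, hA, Matrix.mul_apply,
      conjTranspose_apply, Pi.star_apply, hw, Finset.mul_sum, Finset.sum_mul, star_mul']
    conv_lhs => rw [show (fun i : Fin n => ∑ j, ∑ k, star (v i) * (star (A k i) * A k j * Y i j * v j)) = fun i => ∑ k, ∑ j, star (v i) * (star (A k i) * A k j * Y i j * v j) from funext fun i => Finset.sum_comm]
    rw [Finset.sum_comm]
    refine Finset.sum_congr rfl fun k _ => Finset.sum_congr rfl fun i _ => Finset.sum_congr rfl fun j _ => ?_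
    ring
  rw [key]
  -- find i with v i ≠ 0, then k with A k i ≠ 0
  obtain ⟨i, hi⟩ := Function.ne_iff.mp hv
  have hXii : X i i = ∑ k, star (A k i) * A k i := by
    simp [hA, Matrix.mul_apply]
  obtain ⟨k, hk⟩ : ∃ k, A k i ≠ 0 := by
    by_contra h
    push_neg at h
    exact hXdiag i (by simp [hXii, h])
  have hwk : w k ≠ 0 := fun h => by
    have := congrFun h i
    simp only [hw, Pi.zero_apply, mul_eq_zero] at this
    tauto
  refine Finset.sum_pos' (fun m _ => ?_) ⟨k, Finset.mem_univ k, hY.dotProduct_mulVec_pos hwk⟩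
  by_cases hm : w m = 0
  · simp [hm]
  · exact le_of_lt (hY.dotProduct_mulVec_pos hm)
end

section
/- Let V ∈ ℂ^{n×n} be invertible with V A = D V for a diagonal matrix D = diag(λ_1,…,λ_n). For σ : ℕ → {0,1} and t ∈ ℕ, let W_{σ(t)} = Σ_{i=0}^{t} σ(t−i) A^i B B* (A*)^i. Then V W_{σ(t)} V* = (V B B* V*) ∘ (Λ_{σ(t)} Λ_{σ(t)}*), where Λ_{σ(t)} is the n×(t+1) matrix with entries (Λ_{σ(t)})_{k,j} = σ(t−j) λ_k^j for j = 0,…,t, and ∘ denotes the Hadamard product. -/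
open Matrix ComplexOrder

/-- Hadamard decomposition of the σ-weighted controllability Gramian: if `V A = D V`
with `D = diag(λ)` and `V` invertible, then
`V W_{σ(t)} V* = (V B B* V*) ∘ (Λ_{σ(t)} Λ_{σ(t)}*)` where
`(Λ_{σ(t)})_{k,j} = σ(t−j) λ_k^j`. -/
theorem gramian_hadamard_decomposition {n m : ℕ}
    (A V : Matrix (Fin n) (Fin n) ℂ) (B : Matrix (Fin n) (Fin m) ℂ)
    (lam : Fin n → ℂ) (hV : IsUnit V)
    (hVA : V * A = Matrix.diagonal lam * V)
    (σ : ℕ → ℝ) (hσ : ∀ i, σ i = 0 ∨ σ i = 1) (t : ℕ) :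
    V * (∑ i ∈ Finset.range (t + 1),
        (σ (t - i) : ℂ) • (A ^ i * B * Bᴴ * Aᴴ ^ i)) * Vᴴ =
      (V * B * Bᴴ * Vᴴ).hadamard
        ((Matrix.of fun (k : Fin n) (j : Fin (t + 1)) =>
            (σ (t - (j : ℕ)) : ℂ) * lam k ^ (j : ℕ)) *
          (Matrix.of fun (k : Fin n) (j : Fin (t + 1)) =>
            (σ (t - (j : ℕ)) : ℂ) * lam k ^ (j : ℕ))ᴴ) := by
  have hpow : ∀ i, V * A ^ i = Matrix.diagonal lam ^ i * V := by
    intro i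
    induction i with
    | zero => simp
    | succ k ih =>
      rw [pow_succ, ← mul_assoc, ih, mul_assoc, hVA, ← mul_assoc, ← pow_succ]
  set G := V * B * Bᴴ * Vᴴ with hG
  have key : ∀ i, V * (A ^ i * B * Bᴴ * Aᴴ ^ i) * Vᴴ =
      Matrix.diagonal (lam ^ i) * G * (Matrix.diagonal (lam ^ i))ᴴ := by
    intro i
    have h2 : Aᴴ ^ i * Vᴴ = (V * A ^ i)ᴴ := by
      rw [Matrix.conjTranspose_mul, ← Matrix.conjTranspose_pow]
    calc V * (A ^ i * B * Bᴴ * Aᴴ ^ i) * Vᴴ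
        = (V * A ^ i) * B * Bᴴ * (Aᴴ ^ i * Vᴴ) := by
          simp only [Matrix.mul_assoc]
      _ = (Matrix.diagonal lam ^ i * V) * B * Bᴴ * (Matrix.diagonal lam ^ i * V)ᴴ := by
          rw [h2, hpow]
      _ = Matrix.diagonal (lam ^ i) * G * (Matrix.diagonal (lam ^ i))ᴴ := by
          rw [Matrix.conjTranspose_mul, hG, Matrix.diagonal_pow]
          simp only [Matrix.mul_assoc]
  have key' : ∀ (i : ℕ) (k l : Fin n),
      (V * (A ^ i * B * Bᴴ * Aᴴ ^ i) * Vᴴ) k l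
        = lam k ^ i * G k l * star (lam l) ^ i := by
    intro i k l
    rw [key i, Matrix.diagonal_conjTranspose]
    rw [Matrix.mul_diagonal, Matrix.diagonal_mul]
    simp [Pi.pow_apply, Pi.star_apply, mul_comm, mul_assoc]
  have hdist : V * (∑ i ∈ Finset.range (t + 1),
      (σ (t - i) : ℂ) • (A ^ i * B * Bᴴ * Aᴴ ^ i)) * Vᴴ =
      ∑ i ∈ Finset.range (t + 1),
        (σ (t - i) : ℂ) • (V * (A ^ i * B * Bᴴ * Aᴴ ^ i) * Vᴴ) := by
    rw [Finset.mul_sum, Finset.sum_mul]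
    refine Finset.sum_congr rfl fun i _ => ?_
    rw [Matrix.mul_smul, Matrix.smul_mul]
  rw [hdist]
  ext k l
  have hσ2 : ∀ j : ℕ, (σ j : ℂ) * (σ j : ℂ) = (σ j : ℂ) := by
    intro j
    rcases hσ j with h | h <;> simp [h]
  simp only [Matrix.sum_apply, Matrix.smul_apply, key', Matrix.hadamard_apply,
    Matrix.mul_apply, Matrix.conjTranspose_apply, Matrix.of_apply, smul_eq_mul]
  rw [Fin.sum_univ_eq_sum_range
    (fun j => (σ (t - j) : ℂ) * lam k ^ j * star ((σ (t - j) : ℂ) * lam l ^ j))]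
  rw [Finset.mul_sum]
  refine Finset.sum_congr rfl fun i _ => ?_
  simp only [star_mul', star_pow, Complex.star_def, Complex.conj_ofReal]
  have h := hσ2 (t - i)
  ring_nf
  rw [pow_two, hσ2]
end
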